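/- Suppose there is δ > 0 such that each coordinate of c : ℝ → ℝⁿ is real-analytic on an open set containing (−δ, 1+δ). Then the optimal value function val has finitely many analytic pieces on [0,1]: there exist finitely many points 0 = t₀ ≤ t₁ ≤ ⋯ ≤ t_k = 1 and vertices v₁, …, v_k ∈ V such that val(ε) = h_{v_i}(ε) for all ε ∈ [t_{i−1}, t_i] and each i. -/

import Mathlib

open Filter

/-- An analytic function on a preconnected open neighborhood of `[0,1]` that is not
identically zero on `[0,1]` has finitely many zeros in `[0,1]`. -/
lemma aux_finite_zeros {f : ℝ → ℝ} {I : Set ℝ} (hf : AnalyticOnNhd ℝ f I)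
    (hIc : IsPreconnected I) (hsub : Set.Icc (0:ℝ) 1 ⊆ I)
    (hne : ¬ ∀ x ∈ Set.Icc (0:ℝ) 1, f x = 0) :
    {x ∈ Set.Icc (0:ℝ) 1 | f x = 0}.Finite := by
  by_contra hinf
  rw [← Set.not_infinite, not_not] at hinf
  obtain ⟨x₀, hx₀K, hx₀⟩ := hinf.exists_accPt_of_subset_isCompact isCompact_Icc
    (fun x hx => hx.1)
  have hfreq : ∃ᶠ z in nhdsWithin x₀ {x₀}ᶜ, f z = 0 := by
    have := accPt_iff_frequently.1 hx₀
    rw [frequently_nhdsWithin_iff]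
    exact this.mono (fun z hz => ⟨hz.2.2, hz.1⟩)
  have := hf.eqOn_zero_of_preconnected_of_frequently_eq_zero hIc (hsub hx₀K) hfreq
  exact hne fun x hx => this (hsub hx)

theorem val_finitely_many_analytic_pieces
    (n : ℕ) (hn : 1 ≤ n)
    (V : Finset (Fin n → ℝ)) (hV : V.Nonempty)
    (c : ℝ → (Fin n → ℝ))
    (hc : ∃ δ > (0 : ℝ), ∃ U : Set ℝ, IsOpen U ∧ Set.Ioo (-δ) (1 + δ) ⊆ U ∧
      ∀ i, AnalyticOnNhd ℝ (fun ε => c ε i) U)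
    (h : (Fin n → ℝ) → ℝ → ℝ)
    (hh : ∀ v ε, h v ε = ∑ i, c ε i * v i)
    (val : ℝ → ℝ) (hval : ∀ ε, val ε = V.inf' hV (fun v => h v ε)) :
    ∃ (k : ℕ) (t : Fin (k + 1) → ℝ) (w : Fin k → (Fin n → ℝ)),
      t 0 = 0 ∧ t (Fin.last k) = 1 ∧ Monotone t ∧
      ∀ i : Fin k, w i ∈ V ∧
        ∀ ε ∈ Set.Icc (t i.castSucc) (t i.succ), val ε = h (w i) ε := by
  classical
  obtain ⟨δ, hδ, U, hUopen, hUsub, hcana⟩ := hc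
  set I : Set ℝ := Set.Ioo (-δ) (1 + δ) with hI
  have hIconn : IsPreconnected I := isPreconnected_Ioo
  have hIccI : Set.Icc (0:ℝ) 1 ⊆ I := by
    intro x hx
    exact ⟨by linarith [hx.1], by linarith [hx.2]⟩
  have hana : ∀ v : Fin n → ℝ, AnalyticOnNhd ℝ (h v) I := by
    intro v
    have : (h v) = fun ε => ∑ i, c ε i * v i := funext (hh v)
    rw [this]
    apply Finset.analyticOnNhd_fun_sum
    intro i _
    exact ((hcana i).mono hUsub).mul analyticOnNhd_const
  -- the set of crossing points
  set Z : Set ℝ := {x ∈ Set.Icc (0:ℝ) 1 | ∃ v ∈ V, ∃ u ∈ V,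
      (¬ ∀ y ∈ Set.Icc (0:ℝ) 1, h v y = h u y) ∧ h v x = h u x} with hZ
  have hZfin : Z.Finite := by
    have hsub : Z ⊆ ⋃ v ∈ V, ⋃ u ∈ V,
        {x ∈ Set.Icc (0:ℝ) 1 | (¬ ∀ y ∈ Set.Icc (0:ℝ) 1, h v y = h u y) ∧ h v x = h u x} := by
      rintro x ⟨hx, v, hv, u, hu, hne, heq⟩
      simp only [Set.mem_iUnion]
      exact ⟨v, hv, u, hu, hx, hne, heq⟩
    apply Set.Finite.subset _ hsub
    apply V.finite_toSet.biUnion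
    intro v _
    apply V.finite_toSet.biUnion
    intro u _
    by_cases hne : ∀ y ∈ Set.Icc (0:ℝ) 1, h v y = h u y
    · apply Set.Finite.subset Set.finite_empty
      rintro x ⟨_, hn, _⟩
      exact absurd hne hn
    · have hfin : {x ∈ Set.Icc (0:ℝ) 1 | h v x - h u x = 0}.Finite := by
        apply aux_finite_zeros (f := fun x => h v x - h u x) ((hana v).sub (hana u)) hIconn hIccI
        intro hall
        exact hne fun y hy => by have := hall y hy; linarith
      apply hfin.subset
      rintro x ⟨hx, _, heq⟩
      exact ⟨hx, by linarith⟩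
  -- breakpoints
  set F : Finset ℝ := insert 0 (insert 1 hZfin.toFinset) with hF
  have hF0 : (0:ℝ) ∈ F := Finset.mem_insert_self _ _
  have hF1 : (1:ℝ) ∈ F := Finset.mem_insert_of_mem (Finset.mem_insert_self _ _)
  have hFsub : ∀ x ∈ F, x ∈ Set.Icc (0:ℝ) 1 := by
    intro x hx
    rcases Finset.mem_insert.1 hx with rfl | hx
    · exact ⟨le_refl 0, zero_le_one⟩
    rcases Finset.mem_insert.1 hx with rfl | hx
    · exact ⟨zero_le_one, le_refl 1⟩
    · exact (hZfin.mem_toFinset.1 hx).1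
  have hZF : ∀ x ∈ Z, x ∈ F := fun x hx =>
    Finset.mem_insert_of_mem (Finset.mem_insert_of_mem (hZfin.mem_toFinset.2 hx))
  have hcard : 0 < F.card := Finset.card_pos.2 ⟨0, hF0⟩
  set k : ℕ := F.card - 1 with hk
  have hkm : k + 1 = F.card := Nat.succ_pred_eq_of_pos hcard
  set e : Fin F.card ≃o {x // x ∈ F} := F.orderIsoOfFin rfl with he
  set t : Fin (k + 1) → ℝ := fun i => (e (Fin.cast hkm i) : ℝ) with ht
  have htF : ∀ i, t i ∈ F := fun i => (e (Fin.cast hkm i)).2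
  have htmono : Monotone t := by
    intro i j hij
    exact_mod_cast e.monotone (by exact hij)
  have ht0 : t 0 = 0 := by
    have h1 : t 0 ≤ 0 := by
      have : Fin.cast hkm 0 ≤ e.symm ⟨0, hF0⟩ := Fin.le_def.2 (by simp)
      have := e.monotone this
      simp only [OrderIso.apply_symm_apply] at this
      exact_mod_cast this
    exact le_antisymm h1 (hFsub _ (htF 0)).1
  have htlast : t (Fin.last k) = 1 := by
    have h1 : (1:ℝ) ≤ t (Fin.last k) := by
      have hle : e.symm ⟨1, hF1⟩ ≤ Fin.cast hkm (Fin.last k) := by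
        apply Fin.le_def.2
        have := (e.symm ⟨1, hF1⟩).isLt
        simp only [Fin.coe_cast, Fin.val_last]
        omega
      have := e.monotone hle
      simp only [OrderIso.apply_symm_apply] at this
      exact_mod_cast this
    exact le_antisymm (hFsub _ (htF (Fin.last k))).2 h1
  -- no breakpoint strictly inside a piece
  have hno : ∀ i : Fin k, ∀ z ∈ F, ¬ (t i.castSucc < z ∧ z < t i.succ) := by
    rintro i z hz ⟨h1, h2⟩
    set j := e.symm ⟨z, hz⟩ with hj
    have hz' : (e j : ℝ) = z := by simp [hj]
    have hlt1 : Fin.cast hkm i.castSucc < j := by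
      by_contra hcon
      push_neg at hcon
      have hmono := e.monotone hcon
      have : z ≤ t i.castSucc := by
        rw [← hz']
        exact_mod_cast hmono
      linarith
    have hlt2 : j < Fin.cast hkm i.succ := by
      by_contra hcon
      push_neg at hcon
      have : t i.succ ≤ z := by
        rw [← hz']
        exact_mod_cast e.monotone hcon
      linarith
    have e1 : (i : ℕ) < (j : ℕ) := by simpa using Fin.lt_def.1 hlt1
    have e2 : (j : ℕ) < (i : ℕ) + 1 := by simpa using Fin.lt_def.1 hlt2
    omega
  -- main: on each piece the minimum is attained by a single vertex
  have hmain : ∀ i : Fin k, ∃ v ∈ V,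
      ∀ ε ∈ Set.Icc (t i.castSucc) (t i.succ), val ε = h v ε := by
    intro i
    set a := t i.castSucc with ha
    set b := t i.succ with hb
    have hab : a ≤ b := htmono (Fin.castSucc_le_succ i)
    have haI : a ∈ Set.Icc (0:ℝ) 1 := hFsub _ (htF _)
    have hbI : b ∈ Set.Icc (0:ℝ) 1 := hFsub _ (htF _)
    set m₀ := (a + b) / 2 with hm₀
    have hm₀mem : m₀ ∈ Set.Icc a b := ⟨by linarith, by linarith⟩
    have hIccab : Set.Icc a b ⊆ Set.Icc (0:ℝ) 1 := fun x hx =>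
      ⟨le_trans haI.1 hx.1, le_trans hx.2 hbI.2⟩
    obtain ⟨v, hvV, hvmin⟩ := V.exists_mem_eq_inf' hV (fun u => h u m₀)
    refine ⟨v, hvV, ?_⟩
    intro ε hε
    have key : ∀ u ∈ V, h v ε ≤ h u ε := by
      intro u hu
      by_contra hcon
      push_neg at hcon
      set g : ℝ → ℝ := fun x => h v x - h u x with hg
      have hgana : AnalyticOnNhd ℝ g I := (hana v).sub (hana u)
      have hgcont : ContinuousOn g (Set.Icc (0:ℝ) 1) :=
        (hgana.continuousOn).mono hIccI
      have hgm₀ : g m₀ ≤ 0 := by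
        have : h v m₀ ≤ h u m₀ := hvmin ▸ Finset.inf'_le _ hu
        simp [hg]; linarith
      have hgε : 0 < g ε := by simp [hg]; linarith
      have hεI : ε ∈ Set.Icc (0:ℝ) 1 := hIccab hε
      have hnid : ¬ ∀ y ∈ Set.Icc (0:ℝ) 1, h v y = h u y := by
        intro hall
        have := hall ε hεI
        simp [hg, this] at hgε
      have hzZ : ∀ z ∈ Set.Icc (0:ℝ) 1, g z = 0 → z ∈ F := by
        intro z hz hgz
        apply hZF
        exact ⟨hz, v, hvV, u, hu, hnid, by simp [hg] at hgz; linarith⟩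
      rcases eq_or_lt_of_le hab with heq | hlt
      · -- degenerate interval: ε = m₀
        have hεa : ε = a := le_antisymm (heq ▸ hε.2) hε.1
        have hma : m₀ = a := by rw [hm₀, ← heq]; ring
        rw [hεa, ← hma] at hgε
        linarith
      · have ham : a < m₀ := by rw [hm₀]; linarith
        have hmb : m₀ < b := by rw [hm₀]; linarith
        rcases eq_or_lt_of_le hgm₀ with heq0 | hlt0
        · exact hno i m₀ (hzZ m₀ (hIccab hm₀mem) heq0) ⟨ham, hmb⟩
        · rcases lt_trichotomy m₀ ε with hme | hme | hme
          · have hcont' : ContinuousOn g (Set.Icc m₀ ε) :=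
              hgcont.mono (fun x hx => hIccab ⟨le_trans hm₀mem.1 hx.1, le_trans hx.2 hε.2⟩)
            have := intermediate_value_Ioo hme.le hcont'
            obtain ⟨z, hzmem, hgz⟩ := this ⟨hlt0, hgε⟩
            have hzab : z ∈ Set.Icc a b :=
              ⟨le_trans hm₀mem.1 hzmem.1.le, le_trans hzmem.2.le hε.2⟩
            exact hno i z (hzZ z (hIccab hzab) hgz)
              ⟨lt_trans ham hzmem.1, lt_of_lt_of_le hzmem.2 hε.2⟩
          · rw [hme] at hlt0; linarith
          · have hcont' : ContinuousOn g (Set.Icc ε m₀) :=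
              hgcont.mono (fun x hx => hIccab ⟨le_trans hε.1 hx.1, le_trans hx.2 hm₀mem.2⟩)
            have := intermediate_value_Ioo' hme.le hcont'
            obtain ⟨z, hzmem, hgz⟩ := this ⟨hlt0, hgε⟩
            have hzab : z ∈ Set.Icc a b :=
              ⟨le_trans hε.1 hzmem.1.le, le_trans hzmem.2.le hm₀mem.2⟩
            exact hno i z (hzZ z (hIccab hzab) hgz)
              ⟨lt_of_le_of_lt hε.1 hzmem.1, lt_trans hzmem.2 hmb⟩

    rw [hval]
    apply le_antisymm (Finset.inf'_le _ hvV)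
    exact Finset.le_inf' _ _ (fun u hu => key u hu)
  choose w hw1 hw2 using hmain
  exact ⟨k, t, w, ht0, htlast, htmono, fun i => ⟨hw1 i, hw2 i⟩⟩
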